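/- arXiv:math/0307131 — 10 statements merged into one kernel-verified Lean document; each statement's English description precedes it below -/
import Mathlib

section
/- Let H be an inner product space over 𝕂 (ℝ or ℂ), let z₁,…,zₙ ∈ H and α₁,…,αₙ ∈ 𝕂. Then ‖∑_{i=1}^n αᵢ zᵢ‖² ≤ (max_{1≤i≤n} |αᵢ|²) · ∑_{i,j=1}^n |⟨zᵢ, zⱼ⟩|. -/
open Finset

theorem stmt_0 {𝕜 H : Type*} [RCLike 𝕜] [NormedAddCommGroup H] [InnerProductSpace 𝕜 H]
    {n : ℕ} (hn : 0 < n) (z : Fin n → H) (α : Fin n → 𝕜) :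
    ‖∑ i, α i • z i‖ ^ 2 ≤ (Finset.univ.sup' (Finset.univ_nonempty_iff.mpr ⟨⟨0, hn⟩⟩) (fun i => ‖α i‖ ^ 2)) * ∑ i, ∑ j, ‖(inner 𝕜 (z i) (z j) : 𝕜)‖ := by
  set M := Finset.univ.sup' (Finset.univ_nonempty_iff.mpr ⟨⟨0, hn⟩⟩) (fun i => ‖α i‖ ^ 2) with hM
  have hle : ∀ i, ‖α i‖ ^ 2 ≤ M := fun i =>
    Finset.le_sup' (fun i => ‖α i‖ ^ 2) (Finset.mem_univ i)
  have key : ∀ i j, ‖α i‖ * ‖α j‖ ≤ M := by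
    intro i j
    have h1 := hle i
    have h2 := hle j
    nlinarith [norm_nonneg (α i), norm_nonneg (α j), sq_nonneg (‖α i‖ - ‖α j‖)]
  have h0 : ‖∑ i, α i • z i‖ ^ 2 = ‖(inner 𝕜 (∑ i, α i • z i) (∑ j, α j • z j) : 𝕜)‖ := by
    rw [inner_self_eq_norm_sq_to_K]
    simp [norm_pow]
  rw [h0, sum_inner]
  calc ‖∑ i, (inner 𝕜 (α i • z i) (∑ j, α j • z j) : 𝕜)‖
      ≤ ∑ i, ‖(inner 𝕜 (α i • z i) (∑ j, α j • z j) : 𝕜)‖ := norm_sum_le _ _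
    _ ≤ ∑ i, ∑ j, M * ‖(inner 𝕜 (z i) (z j) : 𝕜)‖ := by
        apply Finset.sum_le_sum
        intro i _
        rw [inner_sum]
        calc ‖∑ j, (inner 𝕜 (α i • z i) (α j • z j) : 𝕜)‖
            ≤ ∑ j, ‖(inner 𝕜 (α i • z i) (α j • z j) : 𝕜)‖ := norm_sum_le _ _
          _ ≤ ∑ j, M * ‖(inner 𝕜 (z i) (z j) : 𝕜)‖ := by
              apply Finset.sum_le_sum
              intro j _
              rw [inner_smul_left, inner_smul_right, norm_mul, norm_mul, RCLike.norm_conj]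
              rw [← mul_assoc]
              exact mul_le_mul_of_nonneg_right (key i j) (norm_nonneg _)
    _ = M * ∑ i, ∑ j, ‖(inner 𝕜 (z i) (z j) : 𝕜)‖ := by
        rw [Finset.mul_sum]
        exact Finset.sum_congr rfl (fun i _ => (Finset.mul_sum _ _ _).symm)
end

section
/- Let H be an inner product space over 𝕂 (ℝ or ℂ), let z₁,…,zₙ ∈ H and α₁,…,αₙ ∈ 𝕂, and let p, q > 1 satisfy 1/p + 1/q = 1. Then ‖∑_{i=1}^n αᵢ zᵢ‖² ≤ (∑_{i=1}^n |αᵢ|^p)^{2/p} · (∑_{i,j=1}^n |⟨zᵢ, zⱼ⟩|^q)^{1/q}. -/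
open Finset

theorem stmt_1 {𝕜 H : Type*} [RCLike 𝕜] [NormedAddCommGroup H] [InnerProductSpace 𝕜 H]
    {n : ℕ} (z : Fin n → H) (α : Fin n → 𝕜)
    {p q : ℝ} (hp : 1 < p) (hq : 1 < q) (hpq : 1 / p + 1 / q = 1) :
    ‖∑ i, α i • z i‖ ^ 2 ≤ (∑ i, ‖α i‖ ^ p) ^ (2 / p) * (∑ i, ∑ j, ‖(inner 𝕜 (z i) (z j) : 𝕜)‖ ^ q) ^ (1 / q) := by
  have hpq' : p.HolderConjugate q := Real.holderConjugate_iff.2 ⟨hp, by simpa [one_div] using hpq⟩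
  -- Step 1: bound the square of the norm by a double sum
  have h1 : ‖∑ i, α i • z i‖ ^ 2 ≤ ∑ i, ∑ j, (‖α i‖ * ‖α j‖) * ‖(inner 𝕜 (z i) (z j) : 𝕜)‖ := by
    have : (‖∑ i, α i • z i‖ : ℝ) ^ 2 = RCLike.re (inner 𝕜 (∑ i, α i • z i) (∑ j, α j • z j) : 𝕜) := by
      rw [inner_self_eq_norm_sq]
    rw [this]
    calc RCLike.re (inner 𝕜 (∑ i, α i • z i) (∑ j, α j • z j) : 𝕜)
        ≤ ‖(inner 𝕜 (∑ i, α i • z i) (∑ j, α j • z j) : 𝕜)‖ := RCLike.re_le_norm _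
      _ = ‖∑ i, ∑ j, (starRingEnd 𝕜) (α i) * α j * (inner 𝕜 (z i) (z j) : 𝕜)‖ := by
          rw [sum_inner]
          congr 1
          refine Finset.sum_congr rfl fun i _ => ?_
          rw [inner_sum]
          refine Finset.sum_congr rfl fun j _ => ?_
          rw [inner_smul_left, inner_smul_right]; ring
      _ ≤ ∑ i, ∑ j, ‖(starRingEnd 𝕜) (α i) * α j * (inner 𝕜 (z i) (z j) : 𝕜)‖ := by
          refine (norm_sum_le _ _).trans (Finset.sum_le_sum fun i _ => norm_sum_le _ _)
      _ = ∑ i, ∑ j, (‖α i‖ * ‖α j‖) * ‖(inner 𝕜 (z i) (z j) : 𝕜)‖ := by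
          refine Finset.sum_congr rfl fun i _ => Finset.sum_congr rfl fun j _ => ?_
          rw [norm_mul, norm_mul, RCLike.norm_conj]
  refine h1.trans ?_
  -- Step 2: Hölder on the double sum, indexed by pairs
  have h2 : ∑ i, ∑ j, (‖α i‖ * ‖α j‖) * ‖(inner 𝕜 (z i) (z j) : 𝕜)‖
      = ∑ ij : Fin n × Fin n, (‖α ij.1‖ * ‖α ij.2‖) * ‖(inner 𝕜 (z ij.1) (z ij.2) : 𝕜)‖ := by
    rw [← Finset.sum_product']
    rfl
  have h3 : ∑ i, ∑ j, ‖(inner 𝕜 (z i) (z j) : 𝕜)‖ ^ q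
      = ∑ ij : Fin n × Fin n, ‖(inner 𝕜 (z ij.1) (z ij.2) : 𝕜)‖ ^ q := by
    rw [← Finset.sum_product']
    rfl
  rw [h2, h3]
  have holder := Real.inner_le_Lp_mul_Lq_of_nonneg (s := Finset.univ)
    (f := fun ij : Fin n × Fin n => ‖α ij.1‖ * ‖α ij.2‖)
    (g := fun ij : Fin n × Fin n => ‖(inner 𝕜 (z ij.1) (z ij.2) : 𝕜)‖) hpq'
    (fun i _ => by positivity) (fun i _ => by positivity)
  refine holder.trans (le_of_eq ?_)
  congr 1
  -- (∑ (‖α i‖‖α j‖)^p)^(1/p) = (∑ ‖α i‖^p)^(2/p)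
  have hs : ∑ ij : Fin n × Fin n, (‖α ij.1‖ * ‖α ij.2‖) ^ p
      = (∑ i, ‖α i‖ ^ p) * (∑ j, ‖α j‖ ^ p) := by
    rw [Finset.sum_mul_sum, ← Finset.sum_product', Finset.univ_product_univ]
    refine Finset.sum_congr rfl fun ij _ => ?_
    rw [Real.mul_rpow (norm_nonneg _) (norm_nonneg _)]
  rw [hs]
  have hS : (0 : ℝ) ≤ ∑ i, ‖α i‖ ^ p := Finset.sum_nonneg fun i _ => Real.rpow_nonneg (norm_nonneg _) _
  rw [← sq, ← Real.rpow_natCast (∑ i, ‖α i‖ ^ p) 2, ← Real.rpow_mul hS]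
  norm_num [div_eq_mul_inv, one_div]
end

section
/- Let H be an inner product space over 𝕂 (ℝ or ℂ), let z₁,…,zₙ ∈ H and α₁,…,αₙ ∈ 𝕂. Then ‖∑_{i=1}^n αᵢ zᵢ‖² ≤ (∑_{i=1}^n |αᵢ|²) · (∑_{i,j=1}^n |⟨zᵢ, zⱼ⟩|²)^{1/2}, and moreover (∑_{i=1}^n |αᵢ|²) · (∑_{i,j=1}^n |⟨zᵢ, zⱼ⟩|²)^{1/2} ≤ (∑_{i=1}^n |αᵢ|²) · (∑_{i=1}^n ‖zᵢ‖²), so this refines the Cauchy–Bunyakovsky–Schwarz inequality for sequences of vectors. -/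
open Finset

theorem stmt_6 {𝕜 H : Type*} [RCLike 𝕜] [NormedAddCommGroup H] [InnerProductSpace 𝕜 H]
    {n : ℕ} (z : Fin n → H) (α : Fin n → 𝕜) :
    ‖∑ i, α i • z i‖ ^ 2 ≤ (∑ i, ‖α i‖ ^ 2) * Real.sqrt (∑ i, ∑ j, ‖(inner 𝕜 (z i) (z j) : 𝕜)‖ ^ 2) ∧
      (∑ i, ‖α i‖ ^ 2) * Real.sqrt (∑ i, ∑ j, ‖(inner 𝕜 (z i) (z j) : 𝕜)‖ ^ 2) ≤ (∑ i, ‖α i‖ ^ 2) * (∑ i, ‖z i‖ ^ 2) := by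
  have hA : (0:ℝ) ≤ ∑ i, ‖α i‖ ^ 2 := Finset.sum_nonneg fun i _ => sq_nonneg _
  constructor
  · -- expand the norm squared via inner product
    have h1 : ‖∑ i, α i • z i‖ ^ 2
        = ‖(inner 𝕜 (∑ i, α i • z i) (∑ j, α j • z j) : 𝕜)‖ := by
      rw [inner_self_eq_norm_sq_to_K]
      simp [norm_pow]
    have h2 : (inner 𝕜 (∑ i, α i • z i) (∑ j, α j • z j) : 𝕜)
        = ∑ i, ∑ j, (starRingEnd 𝕜) (α i) * α j * inner 𝕜 (z i) (z j) := by
      rw [sum_inner]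
      refine Finset.sum_congr rfl fun i _ => ?_
      rw [inner_sum]
      refine Finset.sum_congr rfl fun j _ => ?_
      rw [inner_smul_left, inner_smul_right]
      ring
    have h3 : ‖∑ i, ∑ j, (starRingEnd 𝕜) (α i) * α j * (inner 𝕜 (z i) (z j) : 𝕜)‖
        ≤ ∑ i, ∑ j, (‖α i‖ * ‖α j‖) * ‖(inner 𝕜 (z i) (z j) : 𝕜)‖ := by
      refine (norm_sum_le _ _).trans (Finset.sum_le_sum fun i _ => ?_)
      refine (norm_sum_le _ _).trans (Finset.sum_le_sum fun j _ => ?_)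
      simp [norm_mul]
    -- Cauchy–Schwarz on the double sum
    have h4 : (∑ p : Fin n × Fin n, (‖α p.1‖ * ‖α p.2‖) * ‖(inner 𝕜 (z p.1) (z p.2) : 𝕜)‖) ^ 2
        ≤ (∑ p : Fin n × Fin n, (‖α p.1‖ * ‖α p.2‖) ^ 2)
          * (∑ p : Fin n × Fin n, ‖(inner 𝕜 (z p.1) (z p.2) : 𝕜)‖ ^ 2) :=
      Finset.sum_mul_sq_le_sq_mul_sq _ _ _
    have e1 : (∑ p : Fin n × Fin n, (‖α p.1‖ * ‖α p.2‖) ^ 2) = (∑ i, ‖α i‖ ^ 2) ^ 2 := by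
      rw [Fintype.sum_prod_type, sq, Finset.sum_mul_sum]
      simp [mul_pow]
    have e2 : (∑ p : Fin n × Fin n, ‖(inner 𝕜 (z p.1) (z p.2) : 𝕜)‖ ^ 2)
        = ∑ i, ∑ j, ‖(inner 𝕜 (z i) (z j) : 𝕜)‖ ^ 2 := by
      rw [Fintype.sum_prod_type]
    have e3 : (∑ p : Fin n × Fin n, (‖α p.1‖ * ‖α p.2‖) * ‖(inner 𝕜 (z p.1) (z p.2) : 𝕜)‖)
        = ∑ i, ∑ j, (‖α i‖ * ‖α j‖) * ‖(inner 𝕜 (z i) (z j) : 𝕜)‖ := by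
      rw [Fintype.sum_prod_type]
    have hDnn : (0:ℝ) ≤ ∑ i, ∑ j, (‖α i‖ * ‖α j‖) * ‖(inner 𝕜 (z i) (z j) : 𝕜)‖ :=
      Finset.sum_nonneg fun i _ => Finset.sum_nonneg fun j _ =>
        mul_nonneg (mul_nonneg (norm_nonneg _) (norm_nonneg _)) (norm_nonneg _)
    have key : ∑ i, ∑ j, (‖α i‖ * ‖α j‖) * ‖(inner 𝕜 (z i) (z j) : 𝕜)‖
        ≤ (∑ i, ‖α i‖ ^ 2) * Real.sqrt (∑ i, ∑ j, ‖(inner 𝕜 (z i) (z j) : 𝕜)‖ ^ 2) := by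
      rw [e1, e2, e3] at h4
      have hsq := Real.sqrt_le_sqrt h4
      rw [Real.sqrt_sq hDnn, Real.sqrt_mul (sq_nonneg _), Real.sqrt_sq hA] at hsq
      exact hsq
    calc ‖∑ i, α i • z i‖ ^ 2
        = ‖(inner 𝕜 (∑ i, α i • z i) (∑ j, α j • z j) : 𝕜)‖ := h1
      _ = ‖∑ i, ∑ j, (starRingEnd 𝕜) (α i) * α j * (inner 𝕜 (z i) (z j) : 𝕜)‖ := by rw [h2]
      _ ≤ ∑ i, ∑ j, (‖α i‖ * ‖α j‖) * ‖(inner 𝕜 (z i) (z j) : 𝕜)‖ := h3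
      _ ≤ _ := key
  · refine mul_le_mul_of_nonneg_left ?_ hA
    have hT : (∑ i, ∑ j, ‖(inner 𝕜 (z i) (z j) : 𝕜)‖ ^ 2) ≤ (∑ i, ‖z i‖ ^ 2) ^ 2 := by
      have : (∑ i, ‖z i‖ ^ 2) ^ 2 = ∑ i, ∑ j, (‖z i‖ * ‖z j‖) ^ 2 := by
        rw [sq, Finset.sum_mul_sum]
        simp [mul_pow]
      rw [this]
      refine Finset.sum_le_sum fun i _ => Finset.sum_le_sum fun j _ => ?_
      exact pow_le_pow_left₀ (norm_nonneg _) (norm_inner_le_norm _ _) 2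
    have := Real.sqrt_le_sqrt hT
    rwa [Real.sqrt_sq (Finset.sum_nonneg fun i _ => sq_nonneg _)] at this
end

section
/- Let H be an inner product space over 𝕂 (ℝ or ℂ), let x, y₁,…,yₙ ∈ H and c₁,…,cₙ ∈ 𝕂. Then |∑_{i=1}^n cᵢ ⟨x, yᵢ⟩|² ≤ ‖x‖² · (max_{1≤i≤n} |cᵢ|²) · ∑_{i,j=1}^n |⟨yᵢ, yⱼ⟩|. -/
open Finset

theorem stmt_7 {𝕜 H : Type*} [RCLike 𝕜] [NormedAddCommGroup H] [InnerProductSpace 𝕜 H]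
    {n : ℕ} (hn : 0 < n) (x : H) (y : Fin n → H) (c : Fin n → 𝕜) :
    ‖∑ i, c i * (inner 𝕜 x (y i) : 𝕜)‖ ^ 2 ≤ ‖x‖ ^ 2 * (Finset.univ.sup' (Finset.univ_nonempty_iff.mpr ⟨⟨0, hn⟩⟩) (fun i => ‖c i‖ ^ 2)) * ∑ i, ∑ j, ‖(inner 𝕜 (y i) (y j) : 𝕜)‖ := by
  set M := Finset.univ.sup' (Finset.univ_nonempty_iff.mpr ⟨⟨0, hn⟩⟩) (fun i => ‖c i‖ ^ 2) with hM
  have hMle : ∀ i : Fin n, ‖c i‖ ^ 2 ≤ M := fun i => by rw [hM]; exact Finset.le_sup' (fun i => ‖c i‖ ^ 2) (mem_univ i)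
  have hM0 : 0 ≤ M := le_trans (sq_nonneg _) (hMle ⟨0, hn⟩)
  set z := ∑ i, c i • y i with hz
  have h1 : ∑ i, c i * (inner 𝕜 x (y i) : 𝕜) = inner 𝕜 x z := by
    simp [hz, inner_sum, inner_smul_right]
  have h2 : ‖(inner 𝕜 x z : 𝕜)‖ ≤ ‖x‖ * ‖z‖ := norm_inner_le_norm x z
  have h3 : ‖z‖ ^ 2 ≤ M * ∑ i, ∑ j, ‖(inner 𝕜 (y i) (y j) : 𝕜)‖ := by
    have e1 : (inner 𝕜 z z : 𝕜) = ∑ i, ∑ j, (starRingEnd 𝕜) (c i) * (c j * inner 𝕜 (y i) (y j)) := by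
      simp only [hz, inner_sum, inner_smul_right, sum_inner, inner_smul_left]
      rw [Finset.sum_comm]
      exact Finset.sum_congr rfl fun i _ => by
        rw [Finset.mul_sum]; exact Finset.sum_congr rfl fun j _ => by ring
    have e2 : ‖z‖ ^ 2 = ‖(inner 𝕜 z z : 𝕜)‖ := by
      rw [inner_self_eq_norm_sq_to_K]; simp [norm_pow]
    rw [e2, e1]
    calc ‖∑ i, ∑ j, (starRingEnd 𝕜) (c i) * (c j * (inner 𝕜 (y i) (y j) : 𝕜))‖
        ≤ ∑ i, ∑ j, ‖(starRingEnd 𝕜) (c i) * (c j * (inner 𝕜 (y i) (y j) : 𝕜))‖ := by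
          refine (norm_sum_le _ _).trans (Finset.sum_le_sum fun i _ => norm_sum_le _ _)
      _ ≤ ∑ i, ∑ j, M * ‖(inner 𝕜 (y i) (y j) : 𝕜)‖ := by
          refine Finset.sum_le_sum fun i _ => Finset.sum_le_sum fun j _ => ?_
          rw [norm_mul, norm_mul, RCLike.norm_conj, ← mul_assoc]
          have := hMle i; have := hMle j
          have hcij : ‖c i‖ * ‖c j‖ ≤ M := by nlinarith [norm_nonneg (c i), norm_nonneg (c j)]
          exact mul_le_mul_of_nonneg_right hcij (norm_nonneg _)
      _ = M * ∑ i, ∑ j, ‖(inner 𝕜 (y i) (y j) : 𝕜)‖ := by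
          rw [Finset.mul_sum]; exact Finset.sum_congr rfl fun i _ => (Finset.mul_sum _ _ _).symm
  rw [h1]
  calc ‖(inner 𝕜 x z : 𝕜)‖ ^ 2 ≤ (‖x‖ * ‖z‖) ^ 2 := by
        exact pow_le_pow_left₀ (norm_nonneg _) h2 2
    _ = ‖x‖ ^ 2 * ‖z‖ ^ 2 := by ring
    _ ≤ ‖x‖ ^ 2 * (M * ∑ i, ∑ j, ‖(inner 𝕜 (y i) (y j) : 𝕜)‖) := by
        exact mul_le_mul_of_nonneg_left h3 (sq_nonneg _)
    _ = ‖x‖ ^ 2 * M * ∑ i, ∑ j, ‖(inner 𝕜 (y i) (y j) : 𝕜)‖ := by ring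
end

section
/- Let H be an inner product space over 𝕂 (ℝ or ℂ), let x, y₁,…,yₙ ∈ H and c₁,…,cₙ ∈ 𝕂, and let p, q > 1 satisfy 1/p + 1/q = 1. Then |∑_{i=1}^n cᵢ ⟨x, yᵢ⟩|² ≤ ‖x‖² · (∑_{i=1}^n |cᵢ|^p)^{2/p} · (∑_{i,j=1}^n |⟨yᵢ, yⱼ⟩|^q)^{1/q}. -/
open Finset

theorem stmt_8 {𝕜 H : Type*} [RCLike 𝕜] [NormedAddCommGroup H] [InnerProductSpace 𝕜 H]
    {n : ℕ} (x : H) (y : Fin n → H) (c : Fin n → 𝕜)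
    {p q : ℝ} (hp : 1 < p) (hq : 1 < q) (hpq : 1 / p + 1 / q = 1) :
    ‖∑ i, c i * (inner 𝕜 x (y i) : 𝕜)‖ ^ 2 ≤ ‖x‖ ^ 2 * (∑ i, ‖c i‖ ^ p) ^ (2 / p) * (∑ i, ∑ j, ‖(inner 𝕜 (y i) (y j) : 𝕜)‖ ^ q) ^ (1 / q) := by
  have hpq' : p.HolderConjugate q := Real.holderConjugate_iff.mpr ⟨hp, by simpa [one_div] using hpq⟩
  set z : H := ∑ i, c i • y i with hz
  have hS : ∑ i, c i * (inner 𝕜 x (y i) : 𝕜) = inner 𝕜 x z := by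
    rw [hz, inner_sum]
    exact Finset.sum_congr rfl fun i _ => by rw [inner_smul_right]
  set A : ℝ := ∑ i, ‖c i‖ ^ p with hA
  set B : ℝ := ∑ i, ∑ j, ‖(inner 𝕜 (y i) (y j) : 𝕜)‖ ^ q with hB
  have hAnn : 0 ≤ A := Finset.sum_nonneg fun i _ =>
    Real.rpow_nonneg (norm_nonneg _) _
  -- key estimate on ‖z‖^2
  have hz2 : ‖z‖ ^ 2 ≤ A ^ (2 / p) * B ^ (1 / q) := by
    have h1 : (‖z‖ : ℝ) ^ 2 = ‖(inner 𝕜 z z : 𝕜)‖ := by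
      rw [inner_self_eq_norm_sq_to_K]; simp
    have h2 : (inner 𝕜 z z : 𝕜)
        = ∑ i, ∑ j, (starRingEnd 𝕜) (c i) * c j * inner 𝕜 (y i) (y j) := by
      rw [hz, sum_inner]
      refine Finset.sum_congr rfl fun i _ => ?_
      rw [inner_sum]
      refine Finset.sum_congr rfl fun j _ => ?_
      rw [inner_smul_left, inner_smul_right]; ring
    have h3 : ‖(inner 𝕜 z z : 𝕜)‖
        ≤ ∑ ij : Fin n × Fin n, (‖c ij.1‖ * ‖c ij.2‖) * ‖(inner 𝕜 (y ij.1) (y ij.2) : 𝕜)‖ := by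
      rw [h2, ← Finset.sum_product']
      refine (norm_sum_le _ _).trans ?_
      refine Finset.sum_le_sum fun ij _ => ?_
      rw [norm_mul, norm_mul, RCLike.norm_conj]
    have h4 : ∑ ij : Fin n × Fin n, (‖c ij.1‖ * ‖c ij.2‖) * ‖(inner 𝕜 (y ij.1) (y ij.2) : 𝕜)‖
        ≤ (∑ ij : Fin n × Fin n, |‖c ij.1‖ * ‖c ij.2‖| ^ p) ^ (1 / p)
          * (∑ ij : Fin n × Fin n, |‖(inner 𝕜 (y ij.1) (y ij.2) : 𝕜)‖| ^ q) ^ (1 / q) :=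
      Real.inner_le_Lp_mul_Lq _ _ _ hpq'
    have h5 : ∑ ij : Fin n × Fin n, |‖c ij.1‖ * ‖c ij.2‖| ^ p = A * A := by
      rw [Fintype.sum_prod_type, hA, Finset.sum_mul_sum]
      refine Finset.sum_congr rfl fun i _ => ?_
      refine Finset.sum_congr rfl fun ij _ => ?_
      rw [abs_of_nonneg (mul_nonneg (norm_nonneg _) (norm_nonneg _)),
        Real.mul_rpow (norm_nonneg _) (norm_nonneg _)]
    have h6 : ∑ ij : Fin n × Fin n, |‖(inner 𝕜 (y ij.1) (y ij.2) : 𝕜)‖| ^ q = B := by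
      rw [hB, ← Finset.sum_product']
      exact Finset.sum_congr rfl fun ij _ => by rw [abs_of_nonneg (norm_nonneg _)]
    have h7 : (A * A) ^ (1 / p) = A ^ (2 / p) := by
      rw [← sq, ← Real.rpow_natCast A 2, ← Real.rpow_mul hAnn]
      norm_num [div_eq_mul_inv]
    calc ‖z‖ ^ 2 = ‖(inner 𝕜 z z : 𝕜)‖ := h1
      _ ≤ _ := h3
      _ ≤ _ := h4
      _ = A ^ (2 / p) * B ^ (1 / q) := by rw [h5, h6, h7]
  have hcs : ‖(inner 𝕜 x z : 𝕜)‖ ≤ ‖x‖ * ‖z‖ := norm_inner_le_norm x z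
  calc ‖∑ i, c i * (inner 𝕜 x (y i) : 𝕜)‖ ^ 2 = ‖(inner 𝕜 x z : 𝕜)‖ ^ 2 := by rw [hS]
    _ ≤ (‖x‖ * ‖z‖) ^ 2 := pow_le_pow_left₀ (norm_nonneg _) hcs 2
    _ = ‖x‖ ^ 2 * ‖z‖ ^ 2 := by ring
    _ ≤ ‖x‖ ^ 2 * (A ^ (2 / p) * B ^ (1 / q)) :=
        mul_le_mul_of_nonneg_left hz2 (by positivity)
    _ = ‖x‖ ^ 2 * A ^ (2 / p) * B ^ (1 / q) := by ring
end

section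
/- Let H be an inner product space over 𝕂 (ℝ or ℂ), let x, y₁,…,yₙ ∈ H and c₁,…,cₙ ∈ 𝕂, and let p, q > 1 satisfy 1/p + 1/q = 1. Then |∑_{i=1}^n cᵢ ⟨x, yᵢ⟩|² ≤ ‖x‖² · (∑_{i=1}^n |cᵢ|^p)^{2/p} · (∑_{i=1}^n ‖yᵢ‖^q)^{2/q}. -/
open Finset

theorem stmt_11 {𝕜 H : Type*} [RCLike 𝕜] [NormedAddCommGroup H] [InnerProductSpace 𝕜 H]
    {n : ℕ} (x : H) (y : Fin n → H) (c : Fin n → 𝕜)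
    {p q : ℝ} (hp : 1 < p) (hq : 1 < q) (hpq : 1 / p + 1 / q = 1) :
    ‖∑ i, c i * (inner 𝕜 x (y i) : 𝕜)‖ ^ 2 ≤ ‖x‖ ^ 2 * (∑ i, ‖c i‖ ^ p) ^ (2 / p) * (∑ i, ‖y i‖ ^ q) ^ (2 / q) := by
  have hpq' : p.HolderConjugate q := Real.holderConjugate_iff.mpr ⟨hp, by rw [← hpq]; simp [one_div]⟩
  have h1 : ‖∑ i, c i * (inner 𝕜 x (y i) : 𝕜)‖ ≤ ∑ i, ‖c i‖ * (‖x‖ * ‖y i‖) := by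
    refine (norm_sum_le _ _).trans (Finset.sum_le_sum fun i _ => ?_)
    rw [norm_mul]
    exact mul_le_mul_of_nonneg_left (norm_inner_le_norm x (y i)) (norm_nonneg _)
  have h2 : ∑ i, ‖c i‖ * (‖x‖ * ‖y i‖) = ‖x‖ * ∑ i, ‖c i‖ * ‖y i‖ := by
    rw [Finset.mul_sum]; congr 1; ext i; ring
  have h3 : ∑ i : Fin n, ‖c i‖ * ‖y i‖ ≤
      (∑ i, ‖c i‖ ^ p) ^ (1 / p) * (∑ i, ‖y i‖ ^ q) ^ (1 / q) :=
    Real.inner_le_Lp_mul_Lq_of_nonneg _ hpq' (fun i _ => norm_nonneg _)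
      (fun i _ => norm_nonneg _)
  have key : ‖∑ i, c i * (inner 𝕜 x (y i) : 𝕜)‖ ≤
      ‖x‖ * ((∑ i, ‖c i‖ ^ p) ^ (1 / p) * (∑ i, ‖y i‖ ^ q) ^ (1 / q)) := by
    calc _ ≤ ∑ i, ‖c i‖ * (‖x‖ * ‖y i‖) := h1
    _ = ‖x‖ * ∑ i, ‖c i‖ * ‖y i‖ := h2
    _ ≤ _ := mul_le_mul_of_nonneg_left h3 (norm_nonneg _)
  have hA : (0:ℝ) ≤ ∑ i, ‖c i‖ ^ p := Finset.sum_nonneg fun i _ =>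
    Real.rpow_nonneg (norm_nonneg _) _
  have hB : (0:ℝ) ≤ ∑ i, ‖y i‖ ^ q := Finset.sum_nonneg fun i _ =>
    Real.rpow_nonneg (norm_nonneg _) _
  have := mul_self_le_mul_self (norm_nonneg _) key
  calc ‖∑ i, c i * (inner 𝕜 x (y i) : 𝕜)‖ ^ 2
      = ‖∑ i, c i * (inner 𝕜 x (y i) : 𝕜)‖ * ‖∑ i, c i * (inner 𝕜 x (y i) : 𝕜)‖ := sq _
    _ ≤ (‖x‖ * ((∑ i, ‖c i‖ ^ p) ^ (1 / p) * (∑ i, ‖y i‖ ^ q) ^ (1 / q))) *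
        (‖x‖ * ((∑ i, ‖c i‖ ^ p) ^ (1 / p) * (∑ i, ‖y i‖ ^ q) ^ (1 / q))) := this
    _ = ‖x‖ ^ 2 * (∑ i, ‖c i‖ ^ p) ^ (2 / p) * (∑ i, ‖y i‖ ^ q) ^ (2 / q) := by
        rw [show (2:ℝ)/p = (1/p)*2 by ring, show (2:ℝ)/q = (1/q)*2 by ring,
          Real.rpow_mul hA, Real.rpow_mul hB, Real.rpow_two, Real.rpow_two]
        ring
end

section
/- Let H be an inner product space over 𝕂 (ℝ or ℂ), let x, y₁,…,yₙ ∈ H and c₁,…,cₙ ∈ 𝕂. Then |∑_{i=1}^n cᵢ ⟨x, yᵢ⟩|² ≤ ‖x‖² · (∑_{i=1}^n |cᵢ|²) · (∑_{i,j=1}^n |⟨yᵢ, yⱼ⟩|²)^{1/2}, and moreover ‖x‖² · (∑_{i=1}^n |cᵢ|²) · (∑_{i,j=1}^n |⟨yᵢ, yⱼ⟩|²)^{1/2} ≤ ‖x‖² · (∑_{i=1}^n |cᵢ|²) · (∑_{i=1}^n ‖yᵢ‖²). -/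
open Finset

theorem stmt_13 {𝕜 H : Type*} [RCLike 𝕜] [NormedAddCommGroup H] [InnerProductSpace 𝕜 H]
    {n : ℕ} (x : H) (y : Fin n → H) (c : Fin n → 𝕜) :
    ‖∑ i, c i * (inner 𝕜 x (y i) : 𝕜)‖ ^ 2 ≤ ‖x‖ ^ 2 * (∑ i, ‖c i‖ ^ 2) * Real.sqrt (∑ i, ∑ j, ‖(inner 𝕜 (y i) (y j) : 𝕜)‖ ^ 2) ∧
      ‖x‖ ^ 2 * (∑ i, ‖c i‖ ^ 2) * Real.sqrt (∑ i, ∑ j, ‖(inner 𝕜 (y i) (y j) : 𝕜)‖ ^ 2) ≤ ‖x‖ ^ 2 * (∑ i, ‖c i‖ ^ 2) * (∑ i, ‖y i‖ ^ 2) := by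
  set S : ℝ := ∑ i, ∑ j, ‖(inner 𝕜 (y i) (y j) : 𝕜)‖ ^ 2 with hS
  have hSnn : 0 ≤ S := Finset.sum_nonneg fun i _ => Finset.sum_nonneg fun j _ => sq_nonneg _
  have hcnn : (0:ℝ) ≤ ∑ i, ‖c i‖ ^ 2 := Finset.sum_nonneg fun i _ => sq_nonneg _
  set z : H := ∑ i, c i • y i with hz
  have hxz : (inner 𝕜 x z : 𝕜) = ∑ i, c i * (inner 𝕜 x (y i) : 𝕜) := by
    simp [hz, inner_sum, inner_smul_right]
  -- key bound on ‖z‖²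
  have hzz : (inner 𝕜 z z : 𝕜) = ∑ i, ∑ j, (starRingEnd 𝕜 (c i)) * c j * (inner 𝕜 (y i) (y j) : 𝕜) := by
    simp only [hz, inner_sum, sum_inner, inner_smul_left, inner_smul_right, Finset.mul_sum]
    rw [Finset.sum_comm]
    exact Finset.sum_congr rfl fun i _ => Finset.sum_congr rfl fun j _ => by ring
  have hzsq : ‖z‖ ^ 2 = ‖(inner 𝕜 z z : 𝕜)‖ := by
    rw [@inner_self_eq_norm_sq_to_K 𝕜]
    simp
  have h1 : ‖(inner 𝕜 z z : 𝕜)‖ ≤ ∑ i, ∑ j, (‖c i‖ * ‖c j‖) * ‖(inner 𝕜 (y i) (y j) : 𝕜)‖ := by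
    rw [hzz]
    refine (norm_sum_le _ _).trans (Finset.sum_le_sum fun i _ => ?_)
    refine (norm_sum_le _ _).trans (Finset.sum_le_sum fun j _ => ?_)
    simp [norm_mul]
  -- Cauchy-Schwarz on the double sum
  have h2 : (∑ i, ∑ j, (‖c i‖ * ‖c j‖) * ‖(inner 𝕜 (y i) (y j) : 𝕜)‖) ≤ (∑ i, ‖c i‖ ^ 2) * Real.sqrt S := by
    have key := Finset.sum_mul_sq_le_sq_mul_sq (Finset.univ : Finset (Fin n × Fin n))
      (fun p => ‖c p.1‖ * ‖c p.2‖) (fun p => ‖(inner 𝕜 (y p.1) (y p.2) : 𝕜)‖)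
    rw [← Finset.sum_product', Finset.univ_product_univ]
    have e1 : (∑ p : Fin n × Fin n, (‖c p.1‖ * ‖c p.2‖) ^ 2) = (∑ i, ‖c i‖ ^ 2) ^ 2 := by
      rw [sq (∑ i, ‖c i‖ ^ 2), Finset.sum_mul_sum, ← Finset.sum_product']
      apply Finset.sum_congr rfl
      intro p _; ring
    have e2 : (∑ p : Fin n × Fin n, ‖(inner 𝕜 (y p.1) (y p.2) : 𝕜)‖ ^ 2) = S := by
      rw [hS, ← Finset.sum_product', Finset.univ_product_univ]
    rw [e1, e2] at key
    have hnn : 0 ≤ ∑ p : Fin n × Fin n, (‖c p.1‖ * ‖c p.2‖) * ‖(inner 𝕜 (y p.1) (y p.2) : 𝕜)‖ :=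
      Finset.sum_nonneg fun p _ => mul_nonneg (mul_nonneg (norm_nonneg _) (norm_nonneg _)) (norm_nonneg _)
    have := Real.sqrt_le_sqrt key
    rwa [Real.sqrt_sq hnn, Real.sqrt_mul (sq_nonneg _), Real.sqrt_sq hcnn] at this
  constructor
  · calc ‖∑ i, c i * (inner 𝕜 x (y i) : 𝕜)‖ ^ 2 = ‖(inner 𝕜 x z : 𝕜)‖ ^ 2 := by rw [hxz]
      _ ≤ (‖x‖ * ‖z‖) ^ 2 := by
          have := @norm_inner_le_norm 𝕜 _ _ _ _ x z
          exact pow_le_pow_left₀ (norm_nonneg _) this 2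
      _ = ‖x‖ ^ 2 * ‖z‖ ^ 2 := by ring
      _ ≤ ‖x‖ ^ 2 * ((∑ i, ‖c i‖ ^ 2) * Real.sqrt S) := by
          apply mul_le_mul_of_nonneg_left _ (sq_nonneg _)
          rw [hzsq]; exact h1.trans h2
      _ = ‖x‖ ^ 2 * (∑ i, ‖c i‖ ^ 2) * Real.sqrt S := by ring
  · apply mul_le_mul_of_nonneg_left _ (mul_nonneg (sq_nonneg _) hcnn)
    have hb : S ≤ (∑ i, ‖y i‖ ^ 2) ^ 2 := by
      rw [hS, sq (∑ i, ‖y i‖ ^ 2), Finset.sum_mul_sum]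
      refine Finset.sum_le_sum fun i _ => Finset.sum_le_sum fun j _ => ?_
      have := @norm_inner_le_norm 𝕜 _ _ _ _ (y i) (y j)
      calc ‖(inner 𝕜 (y i) (y j) : 𝕜)‖ ^ 2 ≤ (‖y i‖ * ‖y j‖) ^ 2 :=
            pow_le_pow_left₀ (norm_nonneg _) this 2
        _ = ‖y i‖ ^ 2 * ‖y j‖ ^ 2 := by ring
    calc Real.sqrt S ≤ Real.sqrt ((∑ i, ‖y i‖ ^ 2) ^ 2) := Real.sqrt_le_sqrt hb
      _ = ∑ i, ‖y i‖ ^ 2 := Real.sqrt_sq (Finset.sum_nonneg fun i _ => sq_nonneg _)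
end

section
/- Let H be an inner product space over 𝕂 (ℝ or ℂ) and let x, y₁,…,yₙ ∈ H. Then ∑_{i=1}^n |⟨x, yᵢ⟩|² ≤ ‖x‖ · (max_{1≤i≤n} |⟨x, yᵢ⟩|) · (∑_{i,j=1}^n |⟨yᵢ, yⱼ⟩|)^{1/2}. -/
open Finset

theorem stmt_14 {𝕜 H : Type*} [RCLike 𝕜] [NormedAddCommGroup H] [InnerProductSpace 𝕜 H]
    {n : ℕ} (hn : 0 < n) (x : H) (y : Fin n → H) :
    ∑ i, ‖(inner 𝕜 x (y i) : 𝕜)‖ ^ 2 ≤ ‖x‖ * (Finset.univ.sup' (Finset.univ_nonempty_iff.mpr ⟨⟨0, hn⟩⟩) (fun i => ‖(inner 𝕜 x (y i) : 𝕜)‖)) * Real.sqrt (∑ i, ∑ j, ‖(inner 𝕜 (y i) (y j) : 𝕜)‖) := by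
  set c : Fin n → 𝕜 := fun i => inner 𝕜 x (y i) with hc
  set S : H := ∑ i, (starRingEnd 𝕜) (c i) • y i with hS
  set M : ℝ := Finset.univ.sup' (Finset.univ_nonempty_iff.mpr ⟨⟨0, hn⟩⟩) (fun i => ‖c i‖) with hM
  set T : ℝ := ∑ i, ∑ j, ‖(inner 𝕜 (y i) (y j) : 𝕜)‖ with hT
  have hM0 : 0 ≤ M := le_trans (norm_nonneg (c ⟨0, hn⟩)) (Finset.le_sup' (fun i => ‖c i‖) (Finset.mem_univ ⟨0, hn⟩))
  have hT0 : 0 ≤ T := Finset.sum_nonneg fun i _ => Finset.sum_nonneg fun j _ => norm_nonneg _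
  -- inner 𝕜 x S = ∑ ‖c i‖^2
  have hxS : (inner 𝕜 x S : 𝕜) = ∑ i, (‖c i‖ ^ 2 : ℝ) := by
    rw [hS, inner_sum]
    push_cast
    refine Finset.sum_congr rfl fun i _ => ?_
    rw [inner_smul_right]
    have : (inner 𝕜 x (y i) : 𝕜) = c i := rfl
    rw [this, RCLike.conj_mul]
  have h1 : ∑ i, ‖c i‖ ^ 2 ≤ ‖x‖ * ‖S‖ := by
    have : ‖(inner 𝕜 x S : 𝕜)‖ = ∑ i, ‖c i‖ ^ 2 := by
      rw [hxS, RCLike.norm_ofReal, abs_of_nonneg (Finset.sum_nonneg fun i _ => by positivity)]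
    calc ∑ i, ‖c i‖ ^ 2 = ‖(inner 𝕜 x S : 𝕜)‖ := this.symm
      _ ≤ ‖x‖ * ‖S‖ := norm_inner_le_norm x S
  -- ‖S‖^2 ≤ M^2 * T
  have hS2 : ‖S‖ ^ 2 ≤ M ^ 2 * T := by
    have hSS : ‖S‖ ^ 2 ≤ ‖(inner 𝕜 S S : 𝕜)‖ := by
      rw [@inner_self_eq_norm_sq_to_K 𝕜]
      rw [norm_pow, RCLike.norm_ofReal, abs_norm]
    have hSSb : ‖(inner 𝕜 S S : 𝕜)‖ ≤ ∑ i, ∑ j, ‖c i‖ * ‖c j‖ * ‖(inner 𝕜 (y i) (y j) : 𝕜)‖ := by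
      rw [hS, sum_inner]
      refine le_trans (norm_sum_le _ _) (Finset.sum_le_sum fun i _ => ?_)
      rw [inner_sum]
      refine le_trans (norm_sum_le _ _) (Finset.sum_le_sum fun j _ => ?_)
      rw [inner_smul_left, inner_smul_right, RingHomCompTriple.comp_apply, RingHom.id_apply]
      rw [norm_mul, norm_mul, RCLike.norm_conj]
      exact le_of_eq (by ring)
    have hbound : ∑ i, ∑ j, ‖c i‖ * ‖c j‖ * ‖(inner 𝕜 (y i) (y j) : 𝕜)‖ ≤ M ^ 2 * T := by
      rw [hT, Finset.mul_sum]
      refine Finset.sum_le_sum fun i _ => ?_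
      rw [Finset.mul_sum]
      refine Finset.sum_le_sum fun j _ => ?_
      have hi : ‖c i‖ ≤ M := Finset.le_sup' (fun i => ‖c i‖) (Finset.mem_univ i)
      have hj : ‖c j‖ ≤ M := Finset.le_sup' (fun i => ‖c i‖) (Finset.mem_univ j)
      have := mul_le_mul hi hj (norm_nonneg _) hM0
      calc ‖c i‖ * ‖c j‖ * ‖(inner 𝕜 (y i) (y j) : 𝕜)‖
          ≤ M * M * ‖(inner 𝕜 (y i) (y j) : 𝕜)‖ :=
            mul_le_mul_of_nonneg_right this (norm_nonneg _)
        _ = M ^ 2 * ‖(inner 𝕜 (y i) (y j) : 𝕜)‖ := by ring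
    exact le_trans hSS (le_trans hSSb hbound)
  have hSle : ‖S‖ ≤ M * Real.sqrt T := by
    have : ‖S‖ ^ 2 ≤ (M * Real.sqrt T) ^ 2 := by
      rw [mul_pow, Real.sq_sqrt hT0]; exact hS2
    calc ‖S‖ = Real.sqrt (‖S‖ ^ 2) := (Real.sqrt_sq (norm_nonneg S)).symm
      _ ≤ Real.sqrt ((M * Real.sqrt T) ^ 2) := Real.sqrt_le_sqrt this
      _ = M * Real.sqrt T := Real.sqrt_sq (by positivity)
  calc ∑ i, ‖c i‖ ^ 2 ≤ ‖x‖ * ‖S‖ := h1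
    _ ≤ ‖x‖ * (M * Real.sqrt T) := mul_le_mul_of_nonneg_left hSle (norm_nonneg x)
    _ = ‖x‖ * M * Real.sqrt T := by ring
end

section
/- Let H be an inner product space over 𝕂 (ℝ or ℂ) and let x, y₁,…,yₙ ∈ H. Then ∑_{i=1}^n |⟨x, yᵢ⟩|² ≤ ‖x‖² · (∑_{i,j=1}^n |⟨yᵢ, yⱼ⟩|²)^{1/2}. -/
open Finset

theorem stmt_18 {𝕜 H : Type*} [RCLike 𝕜] [NormedAddCommGroup H] [InnerProductSpace 𝕜 H]
    {n : ℕ} (x : H) (y : Fin n → H) :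
    ∑ i, ‖(inner 𝕜 x (y i) : 𝕜)‖ ^ 2 ≤ ‖x‖ ^ 2 * Real.sqrt (∑ i, ∑ j, ‖(inner 𝕜 (y i) (y j) : 𝕜)‖ ^ 2) := by
  set c : Fin n → 𝕜 := fun i => starRingEnd 𝕜 (inner 𝕜 x (y i)) with hc
  set z : H := ∑ i, c i • y i with hz
  set S : ℝ := ∑ i, ‖(inner 𝕜 x (y i) : 𝕜)‖ ^ 2 with hSdef
  set B : ℝ := Real.sqrt (∑ i, ∑ j, ‖(inner 𝕜 (y i) (y j) : 𝕜)‖ ^ 2) with hBdef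
  have hB0 : 0 ≤ B := Real.sqrt_nonneg _
  have hS0 : 0 ≤ S := Finset.sum_nonneg fun i _ => by positivity
  have hSz : (S : 𝕜) = inner 𝕜 x z := by
    rw [hz, inner_sum]
    push_cast [hSdef]
    refine Finset.sum_congr rfl fun i _ => ?_
    rw [inner_smul_right, hc]
    simp only [RCLike.conj_mul]
  have h1 : S ≤ ‖x‖ * ‖z‖ := by
    calc S = ‖(S : 𝕜)‖ := by rw [RCLike.norm_ofReal, abs_of_nonneg hS0]
    _ ≤ ‖x‖ * ‖z‖ := by rw [hSz]; exact norm_inner_le_norm x z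
  -- ‖z‖² ≤ S * B
  have hcS : ∑ i, ‖c i‖ ^ 2 = S := by
    rw [hSdef]
    exact Finset.sum_congr rfl fun i _ => by rw [hc]; simp [norm_inner_symm (y i) x]
  have h2 : ‖z‖ ^ 2 ≤ S * B := by
    have hzz : (inner 𝕜 z z : 𝕜) = ∑ i, ∑ j, starRingEnd 𝕜 (c i) * (c j * inner 𝕜 (y i) (y j)) := by
      rw [hz]
      simp_rw [sum_inner, inner_sum, inner_smul_left, inner_smul_right]
    have hnorm : ‖z‖ ^ 2 ≤ ∑ i, ∑ j, ‖c i‖ * ‖c j‖ * ‖(inner 𝕜 (y i) (y j) : 𝕜)‖ := by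
      calc ‖z‖ ^ 2 = RCLike.re (inner 𝕜 z z : 𝕜) := (inner_self_eq_norm_sq z).symm
      _ ≤ ‖(inner 𝕜 z z : 𝕜)‖ := RCLike.re_le_norm _
      _ ≤ ∑ i, ∑ j, ‖c i‖ * ‖c j‖ * ‖(inner 𝕜 (y i) (y j) : 𝕜)‖ := by
          rw [hzz]
          refine (norm_sum_le _ _).trans (Finset.sum_le_sum fun i _ => ?_)
          refine (norm_sum_le _ _).trans (Finset.sum_le_sum fun j _ => ?_)
          simp [norm_mul, mul_assoc]
    have hCS : ∑ i, ∑ j, ‖c i‖ * ‖c j‖ * ‖(inner 𝕜 (y i) (y j) : 𝕜)‖ ≤ S * B := by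
      have := Real.sum_mul_le_sqrt_mul_sqrt (Finset.univ : Finset (Fin n × Fin n))
        (fun p => ‖c p.1‖ * ‖c p.2‖) (fun p => ‖(inner 𝕜 (y p.1) (y p.2) : 𝕜)‖)
      simp_rw [Fintype.sum_prod_type] at this
      have hfsq : ∑ i : Fin n, ∑ j : Fin n, (‖c i‖ * ‖c j‖) ^ 2 = S ^ 2 := by
        rw [sq, ← hcS, Finset.sum_mul_sum]
        simp [mul_pow]
      rw [hfsq, Real.sqrt_sq hS0] at this
      rw [hBdef]
      exact this
    exact hnorm.trans hCS
  -- combine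
  rcases eq_or_lt_of_le hS0 with h | h
  · rw [← h]; positivity
  · have key : S * S ≤ ‖x‖ ^ 2 * B * S := by
      calc S * S ≤ (‖x‖ * ‖z‖) * (‖x‖ * ‖z‖) := by
            exact mul_le_mul h1 h1 hS0 (by positivity)
      _ = ‖x‖ ^ 2 * ‖z‖ ^ 2 := by ring
      _ ≤ ‖x‖ ^ 2 * (S * B) := by
            exact mul_le_mul_of_nonneg_left h2 (by positivity)
      _ = ‖x‖ ^ 2 * B * S := by ring
    exact le_of_mul_le_mul_right key h
end

section
/- Let H be an inner product space over 𝕂 (ℝ or ℂ), let x, y₁,…,yₙ ∈ H, and let p ∈ (1, 2] and q > 1 satisfy 1/p + 1/q = 1. Then ∑_{i=1}^n |⟨x, yᵢ⟩|² ≤ n^{2/p − 1} · ‖x‖² · (∑_{i,j=1}^n |⟨yᵢ, yⱼ⟩|^q)^{1/q}. -/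
open Finset

theorem stmt_19 {𝕜 H : Type*} [RCLike 𝕜] [NormedAddCommGroup H] [InnerProductSpace 𝕜 H]
    {n : ℕ} (x : H) (y : Fin n → H)
    {p q : ℝ} (hp : 1 < p) (hp2 : p ≤ 2) (hq : 1 < q) (hpq : 1 / p + 1 / q = 1) :
    ∑ i, ‖(inner 𝕜 x (y i) : 𝕜)‖ ^ 2 ≤ (n : ℝ) ^ (2 / p - 1) * ‖x‖ ^ 2 * (∑ i, ∑ j, ‖(inner 𝕜 (y i) (y j) : 𝕜)‖ ^ q) ^ (1 / q) := by
  have hp0 : 0 < p := lt_trans one_pos hp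
  set a : Fin n → 𝕜 := fun i => inner 𝕜 x (y i) with ha
  set S : ℝ := ∑ i, ‖a i‖ ^ 2 with hSdef
  set B : ℝ := ∑ i, ∑ j, ‖(inner 𝕜 (y i) (y j) : 𝕜)‖ ^ q with hBdef
  have hS0 : (0:ℝ) ≤ S := Finset.sum_nonneg fun i _ => by positivity
  have hB0 : (0:ℝ) ≤ B :=
    Finset.sum_nonneg fun i _ => Finset.sum_nonneg fun j _ =>
      Real.rpow_nonneg (norm_nonneg _) q
  set z : H := ∑ i, (starRingEnd 𝕜 (a i)) • y i with hz
  -- inner 𝕜 x z = S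
  have hxz : (inner 𝕜 x z : 𝕜) = (S : 𝕜) := by
    rw [hz, inner_sum]
    simp only [inner_smul_right, hSdef]
    push_cast
    refine Finset.sum_congr rfl fun i _ => ?_
    rw [show (inner 𝕜 x (y i) : 𝕜) = a i from rfl, RCLike.conj_mul]
  -- Step 1 : S ≤ ‖x‖ * ‖z‖
  have h1 : S ≤ ‖x‖ * ‖z‖ := by
    have : ‖(inner 𝕜 x z : 𝕜)‖ = S := by
      rw [hxz, RCLike.norm_ofReal, abs_of_nonneg hS0]
    rw [← this]
    exact norm_inner_le_norm x z
  -- Step 2 : ‖z‖^2 ≤ double sum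
  have h2 : ‖z‖ ^ 2 ≤ ∑ i, ∑ j, ‖a i‖ * ‖a j‖ * ‖(inner 𝕜 (y i) (y j) : 𝕜)‖ := by
    have e1 : ‖z‖ ^ 2 ≤ ‖(inner 𝕜 z z : 𝕜)‖ := by
      rw [← inner_self_eq_norm_sq (𝕜 := 𝕜) z]
      exact RCLike.re_le_norm _
    refine e1.trans ?_
    rw [hz, sum_inner]
    refine (norm_sum_le _ _).trans (Finset.sum_le_sum fun i _ => ?_)
    rw [inner_sum]
    refine (norm_sum_le _ _).trans (Finset.sum_le_sum fun j _ => ?_)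
    rw [inner_smul_left, inner_smul_right, ← mul_assoc]
    simp [RCLike.norm_conj]
  -- Hölder on the double sum
  have hcc : Real.HolderConjugate p q := ⟨by rw [inv_one]; simpa [one_div] using hpq, hp0, lt_trans one_pos hq⟩
  set T : ℝ := ∑ i, ‖a i‖ ^ p with hTdef
  have hT0 : (0:ℝ) ≤ T := Finset.sum_nonneg fun i _ => Real.rpow_nonneg (norm_nonneg _) _
  have h3 : ∑ i, ∑ j, ‖a i‖ * ‖a j‖ * ‖(inner 𝕜 (y i) (y j) : 𝕜)‖
      ≤ (T ^ 2) ^ (1/p) * B ^ (1/q) := by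
    have hH := Real.inner_le_Lp_mul_Lq_of_nonneg (Finset.univ : Finset (Fin n × Fin n))
      (f := fun ij => ‖a ij.1‖ * ‖a ij.2‖)
      (g := fun ij => ‖(inner 𝕜 (y ij.1) (y ij.2) : 𝕜)‖) hcc
      (fun i _ => mul_nonneg (norm_nonneg _) (norm_nonneg _))
      (fun i _ => norm_nonneg _)
    rw [Fintype.sum_prod_type] at hH
    have e2 : ∑ ij : Fin n × Fin n, (‖a ij.1‖ * ‖a ij.2‖) ^ p = T ^ 2 := by
      rw [Fintype.sum_prod_type]
      have : ∀ i j : Fin n, (‖a i‖ * ‖a j‖) ^ p = ‖a i‖ ^ p * ‖a j‖ ^ p :=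
        fun i j => Real.mul_rpow (norm_nonneg _) (norm_nonneg _)
      simp only [this, ← Finset.mul_sum, ← Finset.sum_mul]
      rw [hTdef]; ring
    have e3 : ∑ ij : Fin n × Fin n, ‖(inner 𝕜 (y ij.1) (y ij.2) : 𝕜)‖ ^ q = B := by
      rw [Fintype.sum_prod_type, hBdef]
    rw [e2, e3] at hH
    exact hH
  -- Step 4 : T ≤ n^(1-p/2) * S^(p/2)
  have h4 : T ≤ (n : ℝ) ^ (1 - p/2) * S ^ (p/2) := by
    have hw := Real.inner_le_weight_mul_Lp_of_nonneg (Finset.univ : Finset (Fin n))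
      (p := 2/p) (by rw [le_div_iff₀ hp0]; linarith)
      (fun _ => (1:ℝ)) (fun i => ‖a i‖ ^ p)
      (fun i => zero_le_one) (fun i => Real.rpow_nonneg (norm_nonneg _) _)
    simp only [one_mul] at hw
    have e4 : ∀ i : Fin n, (‖a i‖ ^ p) ^ (2/p) = ‖a i‖ ^ 2 := by
      intro i
      rw [← Real.rpow_mul (norm_nonneg _), ← Real.rpow_natCast (‖a i‖) 2]
      congr 1
      push_cast
      field_simp
    simp only [e4] at hw
    have e5 : ((2:ℝ)/p)⁻¹ = p/2 := by field_simp
    rw [Finset.sum_const, Finset.card_univ, Fintype.card_fin, nsmul_eq_mul, mul_one, e5] at hw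
    calc T ≤ ((n:ℝ)) ^ (1 - p/2) * (∑ i, ‖a i‖ ^ 2) ^ (p/2) := hw
    _ = (n : ℝ) ^ (1 - p/2) * S ^ (p/2) := by rw [hSdef]
  -- combine: ‖z‖^2 ≤ n^(2/p-1) * S * B^(1/q)
  have hn0 : (0:ℝ) ≤ (n:ℝ) := Nat.cast_nonneg n
  have h5 : (T ^ 2) ^ (1/p) ≤ (n : ℝ) ^ (2/p - 1) * S := by
    have : T ^ 2 ≤ ((n : ℝ) ^ (1 - p/2) * S ^ (p/2)) ^ 2 := by
      have := mul_self_le_mul_self hT0 h4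
      simpa [pow_two] using this
    calc (T ^ 2) ^ (1/p) ≤ (((n : ℝ) ^ (1 - p/2) * S ^ (p/2)) ^ 2) ^ (1/p) := by
          apply Real.rpow_le_rpow (by positivity) this (by positivity)
      _ = (n : ℝ) ^ (2/p - 1) * S := by
          rw [mul_pow, ← Real.rpow_natCast ((n:ℝ) ^ (1 - p/2)) 2,
            ← Real.rpow_natCast (S ^ (p/2)) 2,
            ← Real.rpow_mul hn0, ← Real.rpow_mul hS0,
            Real.mul_rpow (by positivity) (by positivity),
            ← Real.rpow_mul hn0, ← Real.rpow_mul hS0]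
          push_cast
          rw [show ((1:ℝ) - p/2) * 2 * (1/p) = 2/p - 1 by field_simp,
            show (p/2) * 2 * (1/p) = 1 by field_simp,
            Real.rpow_one]
  have hz2 : ‖z‖ ^ 2 ≤ (n : ℝ) ^ (2/p - 1) * S * B ^ (1/q) := by
    refine h2.trans (h3.trans ?_)
    have : B ^ (1/q) ≥ 0 := Real.rpow_nonneg hB0 _
    calc (T ^ 2) ^ (1/p) * B ^ (1/q) ≤ ((n:ℝ) ^ (2/p-1) * S) * B ^ (1/q) := by gcongr
      _ = (n : ℝ) ^ (2/p - 1) * S * B ^ (1/q) := by ring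
  -- conclude
  set K : ℝ := (n : ℝ) ^ (2/p - 1) * ‖x‖ ^ 2 * B ^ (1/q) with hK
  have hK0 : 0 ≤ K := by positivity
  show S ≤ K
  rcases eq_or_lt_of_le hS0 with h | h
  · rw [← h]; exact hK0
  · have key : S * S ≤ K * S := by
      calc S * S = S ^ 2 := (sq S).symm
        _ ≤ (‖x‖ * ‖z‖) ^ 2 := by
            apply pow_le_pow_left₀ hS0 h1
        _ = ‖x‖ ^ 2 * ‖z‖ ^ 2 := by ring
        _ ≤ ‖x‖ ^ 2 * ((n : ℝ) ^ (2/p - 1) * S * B ^ (1/q)) := by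
            apply mul_le_mul_of_nonneg_left hz2 (by positivity)
        _ = K * S := by rw [hK]; ring
    exact le_of_mul_le_mul_right key h
end
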